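/- Let Λ be an A↛B semicausal channel on the bipartite system A × B, and let ρ_Choi = (id_{A'B'} ⊗ Λ)[P⁺_{AA'} ⊗ P⁺_{BB'}] be its Choi–Jamiołkowski state, where A' and B' are copies of A and B. Then the partial trace of ρ_Choi over the A factor equals (I_{A'}/|A|) ⊗ ρ_{BB'}, where ρ_{BB'} = (Λ_B ⊗ id_{B'})[P⁺_{BB'}] and Λ_B is the reduced channel Λ_B[σ] = Tr_A(Λ[(I_A/|A|) ⊗ σ]). -/

import Mathlib

open Matrix BigOperators
open scoped Kronecker ComplexOrder

noncomputable section

/-- Partial trace over the `A` factor. -/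
def trA {A B : Type*} [Fintype A] (ρ : Matrix (A × B) (A × B) ℂ) : Matrix B B ℂ :=
  Matrix.of fun b b' => ∑ a, ρ (a, b) (a, b')

/-- Partial trace over the `B` factor. -/
def trB {A B : Type*} [Fintype B] (ρ : Matrix (A × B) (A × B) ℂ) : Matrix A A ℂ :=
  Matrix.of fun a a' => ∑ b, ρ (a, b) (a', b)

/-- A state: positive semidefinite matrix of trace 1. -/
def IsState {n : Type*} [Fintype n] (ρ : Matrix n n ℂ) : Prop :=
  ρ.PosSemidef ∧ ρ.trace = 1

/-- A channel: a map admitting a Kraus representation `Λ[X] = ∑ i, K i * X * (K i)ᴴ`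
with `∑ i, (K i)ᴴ * K i = 1` (completely positive and trace-preserving). -/
def IsChannel {n : Type*} [Fintype n] [DecidableEq n]
    (Λ : Matrix n n ℂ → Matrix n n ℂ) : Prop :=
  ∃ (m : ℕ) (K : Fin m → Matrix n n ℂ),
    (∀ X, Λ X = ∑ i, K i * X * (K i)ᴴ) ∧ (∑ i, (K i)ᴴ * K i = 1)

/-- The induced map `Γ ⊗ id` on the bipartite system, acting blockwise. -/
def tensIdA {A B : Type*} (Γ : Matrix A A ℂ → Matrix A A ℂ)
    (ρ : Matrix (A × B) (A × B) ℂ) : Matrix (A × B) (A × B) ℂ :=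
  Matrix.of fun p q => Γ (Matrix.of fun a a' => ρ (a, p.2) (a', q.2)) p.1 q.1

/-- The induced map `id ⊗ Γ` on the bipartite system, acting blockwise. -/
def tensIdB {A B : Type*} (Γ : Matrix B B ℂ → Matrix B B ℂ)
    (ρ : Matrix (A × B) (A × B) ℂ) : Matrix (A × B) (A × B) ℂ :=
  Matrix.of fun p q => Γ (Matrix.of fun b b' => ρ (p.1, b) (q.1, b')) p.2 q.2

/-- `Λ` is A↛B semicausal: no channel applied by Alice beforehand affects Bob's
reduced output state. -/
def SemicausalAtoB {A B : Type*} [Fintype A] [Fintype B] [DecidableEq A]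
    (Λ : Matrix (A × B) (A × B) ℂ → Matrix (A × B) (A × B) ℂ) : Prop :=
  ∀ ρ : Matrix (A × B) (A × B) ℂ, IsState ρ →
    ∀ Γ : Matrix A A ℂ → Matrix A A ℂ, IsChannel Γ →
      trA (Λ (tensIdA Γ ρ)) = trA (Λ ρ)

/-- `Λ` is A↚B semicausal: no channel applied by Bob beforehand affects Alice's
reduced output state. -/
def SemicausalBtoA {A B : Type*} [Fintype A] [Fintype B] [DecidableEq B]
    (Λ : Matrix (A × B) (A × B) ℂ → Matrix (A × B) (A × B) ℂ) : Prop :=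
  ∀ ρ : Matrix (A × B) (A × B) ℂ, IsState ρ →
    ∀ Γ : Matrix B B ℂ → Matrix B B ℂ, IsChannel Γ →
      trB (Λ (tensIdB Γ ρ)) = trB (Λ ρ)

/-- `Λ` is causal: both A↛B and A↚B semicausal. -/
def Causal {A B : Type*} [Fintype A] [Fintype B] [DecidableEq A] [DecidableEq B]
    (Λ : Matrix (A × B) (A × B) ℂ → Matrix (A × B) (A × B) ℂ) : Prop :=
  SemicausalAtoB Λ ∧ SemicausalBtoA Λ

/-- The reduced map of `Λ` on `B`: `Λ_B[σ] = Tr_A(Λ[(I_A/|A|) ⊗ σ])`. -/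
def redB {A B : Type*} [Fintype A] [Fintype B] [DecidableEq A]
    (Λ : Matrix (A × B) (A × B) ℂ → Matrix (A × B) (A × B) ℂ)
    (σ : Matrix B B ℂ) : Matrix B B ℂ :=
  trA (Λ ((((Fintype.card A : ℂ))⁻¹ • (1 : Matrix A A ℂ)) ⊗ₖ σ))

/-- The induced map `Λ ⊗ id` acting on the first factor of `n × C`. -/
def lamTensId {n C : Type*} (Λ : Matrix n n ℂ → Matrix n n ℂ)
    (ρ : Matrix (n × C) (n × C) ℂ) : Matrix (n × C) (n × C) ℂ :=
  Matrix.of fun p q => Λ (Matrix.of fun i j => ρ (i, p.2) (j, q.2)) p.1 q.1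

/-- The projector `P⁺` onto the maximally entangled vector
`|ψ⁺⟩ = (1/√|n|) ∑ i, |i⟩ ⊗ |i⟩` of `ℂ^n ⊗ ℂ^n`. -/
def maxEnt (n : Type*) [Fintype n] [DecidableEq n] : Matrix (n × n) (n × n) ℂ :=
  Matrix.of fun p q =>
    if p.1 = p.2 ∧ q.1 = q.2 then ((Fintype.card n : ℂ))⁻¹ else 0

namespace Stmt9Aux

open Matrix

variable {n : Type*} [Fintype n] [DecidableEq n]

/-- Outer products are positive semidefinite. -/
lemma outer_posSemidef (u : n → ℂ) : (Matrix.vecMulVec u (star u)).PosSemidef := by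
  have h : Matrix.vecMulVec u (star u)
      = (Matrix.of fun (_ : Fin 1) j => star (u j))ᴴ *
        (Matrix.of fun (_ : Fin 1) j => star (u j)) := by
    ext i j
    simp [Matrix.mul_apply, Matrix.vecMulVec, Matrix.conjTranspose_apply]
  rw [h]
  exact Matrix.posSemidef_conjTranspose_mul_self _

lemma smul_posSemidef {M : Matrix n n ℂ} (hM : M.PosSemidef) {c : ℂ} (hc : 0 ≤ c) :
    (c • M).PosSemidef := by
  have hcs : star c = c := by
    rw [Complex.star_def, Complex.conj_eq_iff_im]
    exact ((Complex.le_def.mp hc).2).symm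
  refine ⟨?_, fun x => ?_⟩
  · unfold Matrix.IsHermitian
    rw [Matrix.conjTranspose_smul, hM.1, hcs]
  · exact (hM.smul hc).2 x

lemma trace_outer (u : n → ℂ) :
    (Matrix.vecMulVec u (star u)).trace = ∑ r, u r * star (u r) := by
  simp [Matrix.trace, Matrix.diag, Matrix.vecMulVec]

/-- conjTranspose of a std basis matrix -/
lemma stdBasis_conjT (i j : n) :
    (Matrix.single i j (1:ℂ))ᴴ = Matrix.single j i 1 := by
  ext a b
  simp [Matrix.conjTranspose_apply, Matrix.single, and_comm]

lemma E_state (p : n) : IsState (Matrix.single p p (1:ℂ)) := by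
  constructor
  · have h : Matrix.single p p (1:ℂ)
        = Matrix.vecMulVec (fun r => if r = p then 1 else 0)
            (star (fun r => if r = p then (1:ℂ) else 0)) := by
      ext i j
      simp only [Matrix.single, Matrix.vecMulVec_apply, Matrix.of_apply,
        Pi.star_apply]
      by_cases h1 : i = p <;> by_cases h2 : j = p <;>
        simp_all [eq_comm, and_comm]
    rw [h]
    exact outer_posSemidef _
  · simp [Matrix.trace, Matrix.diag, Matrix.single]

def vone (p q : n) : n → ℂ := fun r => if r = p then 1 else if r = q then 1 else 0
def vi (p q : n) : n → ℂ := fun r => if r = p then 1 else if r = q then Complex.I else 0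

lemma vone_state {p q : n} (hpq : p ≠ q) :
    IsState (((2:ℂ)⁻¹) • Matrix.vecMulVec (vone p q) (star (vone p q))) := by
  constructor
  · exact smul_posSemidef (outer_posSemidef _) (by norm_num [Complex.le_def])
  · rw [Matrix.trace_smul, trace_outer]
    have h : ∀ r, vone p q r * star (vone p q r)
        = (if r = p then 1 else 0) + (if r = q then (1:ℂ) else 0) := by
      intro r
      by_cases h1 : r = p <;> by_cases h2 : r = q <;>
        simp_all [vone]
    rw [Finset.sum_congr rfl fun r _ => h r, Finset.sum_add_distrib]
    simp
    norm_num

lemma vi_state {p q : n} (hpq : p ≠ q) :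
    IsState (((2:ℂ)⁻¹) • Matrix.vecMulVec (vi p q) (star (vi p q))) := by
  constructor
  · exact smul_posSemidef (outer_posSemidef _) (by norm_num [Complex.le_def])
  · rw [Matrix.trace_smul, trace_outer]
    have h : ∀ r, vi p q r * star (vi p q r)
        = (if r = p then 1 else 0) + (if r = q then (1:ℂ) else 0) := by
      intro r
      by_cases h1 : r = p <;> by_cases h2 : r = q <;>
        simp_all [vi, Complex.star_def, Complex.mul_conj]
    rw [Finset.sum_congr rfl fun r _ => h r, Finset.sum_add_distrib]
    simp
    norm_num

/-- Decomposition of an off-diagonal matrix unit as a combination of states. -/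
lemma stdBasis_decomp {p q : n} (hpq : p ≠ q) :
    Matrix.single p q (1:ℂ)
      = (((2:ℂ)⁻¹) • Matrix.vecMulVec (vone p q) (star (vone p q)))
        + Complex.I • (((2:ℂ)⁻¹) • Matrix.vecMulVec (vi p q) (star (vi p q)))
        + (-((1+Complex.I)/2)) • Matrix.single p p 1
        + (-((1+Complex.I)/2)) • Matrix.single q q 1 := by
  ext i j
  have hqp : q ≠ p := Ne.symm hpq
  simp only [Matrix.add_apply, Matrix.smul_apply, Matrix.vecMulVec_apply,
    Matrix.single, Matrix.of_apply, Pi.star_apply, vone, vi, smul_eq_mul]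
  by_cases h1 : i = p <;> by_cases h2 : j = p <;> by_cases h3 : i = q <;>
    by_cases h4 : j = q <;>
    simp_all [Complex.star_def, Complex.conj_I, eq_comm] <;> (try ring_nf) <;>
    (try simp [Complex.I_sq]) <;> (try ring) <;> (try norm_num [Complex.ext_iff])

end Stmt9Aux

/-- The completely depolarizing channel on `A`. -/
def Gdep (A : Type*) [Fintype A] [DecidableEq A] : Matrix A A ℂ → Matrix A A ℂ :=
  fun M => (M.trace * (Fintype.card A : ℂ)⁻¹) • 1

lemma E_mul_E {n : Type*} [Fintype n] [DecidableEq n] (a b : n) (X : Matrix n n ℂ) :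
    Matrix.single a b 1 * X * Matrix.single b a 1
      = X b b • Matrix.single a a 1 := by
  ext i j
  simp [Matrix.mul_apply, Matrix.single, ite_and, Finset.sum_ite_eq,
    Finset.sum_ite_eq', mul_ite, ite_mul, Matrix.smul_apply]
  by_cases hi : a = i <;> by_cases hj : a = j <;> simp [hi, hj]

lemma Gdep_sum (A : Type*) [Fintype A] [DecidableEq A] (X : Matrix A A ℂ) :
    Gdep A X
      = ∑ p : A × A, ((Fintype.card A : ℂ)⁻¹ * X p.2 p.2) • Matrix.single p.1 p.1 1 := by
  unfold Gdep
  ext i j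
  rw [Matrix.sum_apply, Fintype.sum_prod_type]
  simp only [Matrix.smul_apply, Matrix.single, Matrix.of_apply, smul_eq_mul,
    Matrix.one_apply, Matrix.trace, Matrix.diag, mul_ite, mul_one, mul_zero, ite_and]
  by_cases hij : i = j
  · subst hij
    simp [Finset.sum_ite_eq]
    rw [Finset.sum_mul]
    exact Finset.sum_congr rfl fun x _ => mul_comm (X x x) _
  · simp [hij, Ne.symm hij]

lemma sum_E_diag (A : Type*) [Fintype A] [DecidableEq A] [Nonempty A] :
    (∑ p : A × A, (Fintype.card A : ℂ)⁻¹ • Matrix.single p.2 p.2 (1:ℂ)) = 1 := by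
  ext i j
  rw [Matrix.sum_apply, Fintype.sum_prod_type]
  simp only [Matrix.smul_apply, Matrix.single, Matrix.of_apply, smul_eq_mul,
    Matrix.one_apply, mul_ite, mul_one, mul_zero, ite_and]
  by_cases hij : i = j
  · subst hij
    simp only [Finset.sum_ite_eq', Finset.mem_univ, if_true, Finset.sum_const,
      Finset.card_univ, nsmul_eq_mul]
    rw [mul_inv_cancel₀]
    exact_mod_cast Fintype.card_ne_zero
  · simp [hij, Ne.symm hij]

lemma Gdep_channel (A : Type*) [Fintype A] [DecidableEq A] [Nonempty A] :
    IsChannel (Gdep A) := by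
  classical
  set c : ℂ := (((Real.sqrt (Fintype.card A))⁻¹ : ℝ) : ℂ) with hc
  have hcard : (0:ℝ) ≤ (Fintype.card A : ℝ) := Nat.cast_nonneg _
  have hcstar : star c = c := by simp [hc, Complex.star_def, Complex.conj_ofReal]
  have hcsq : c * c = ((Fintype.card A : ℂ))⁻¹ := by
    rw [hc, ← Complex.ofReal_mul, ← mul_inv, Real.mul_self_sqrt hcard]
    push_cast
    ring
  set e := (Fintype.equivFin (A × A)).symm with he
  refine ⟨Fintype.card (A × A),
    fun i => c • Matrix.single (e i).1 (e i).2 (1:ℂ), fun X => ?_, ?_⟩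
  · have key : ∀ p : A × A,
        (c • Matrix.single p.1 p.2 (1:ℂ)) * X *
          (c • Matrix.single p.1 p.2 (1:ℂ))ᴴ
        = ((Fintype.card A : ℂ)⁻¹ * X p.2 p.2) • Matrix.single p.1 p.1 1 := by
      intro p
      rw [Matrix.conjTranspose_smul, Stmt9Aux.stdBasis_conjT, hcstar]
      rw [Matrix.smul_mul, Matrix.smul_mul, Matrix.mul_smul, smul_smul]
      rw [E_mul_E, smul_smul, hcsq]
    rw [Equiv.sum_comp e (fun p : A × A =>
        (c • Matrix.single p.1 p.2 (1:ℂ)) * X *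
          (c • Matrix.single p.1 p.2 (1:ℂ))ᴴ)]
    rw [Finset.sum_congr rfl fun p _ => key p]
    exact Gdep_sum A X
  · have key : ∀ p : A × A,
        (c • Matrix.single p.1 p.2 (1:ℂ))ᴴ *
          (c • Matrix.single p.1 p.2 (1:ℂ))
        = (Fintype.card A : ℂ)⁻¹ • Matrix.single p.2 p.2 1 := by
      intro p
      rw [Matrix.conjTranspose_smul, Stmt9Aux.stdBasis_conjT, hcstar]
      rw [Matrix.smul_mul, Matrix.mul_smul, smul_smul, hcsq,
        Matrix.single_mul_single_same, one_mul]
    rw [Equiv.sum_comp e (fun p : A × A =>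
        (c • Matrix.single p.1 p.2 (1:ℂ))ᴴ *
          (c • Matrix.single p.1 p.2 (1:ℂ)))]
    rw [Finset.sum_congr rfl fun p _ => key p]
    exact sum_E_diag A

section KeyLemma

variable {A B : Type*} [Fintype A] [Fintype B] [DecidableEq A] [DecidableEq B]

lemma trA_add (X Y : Matrix (A × B) (A × B) ℂ) : trA (X + Y) = trA X + trA Y := by
  ext b d
  simp [trA, Finset.sum_add_distrib]

lemma trA_smul (s : ℂ) (X : Matrix (A × B) (A × B) ℂ) : trA (s • X) = s • trA X := by
  ext b d
  simp [trA, Finset.mul_sum]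

lemma tensIdA_Gdep_apply (ρ : Matrix (A × B) (A × B) ℂ) (p q : A × B) :
    tensIdA (Gdep A) ρ p q
      = if p.1 = q.1 then (∑ a, ρ (a, p.2) (a, q.2)) * (Fintype.card A : ℂ)⁻¹ else 0 := by
  simp [tensIdA, Gdep, Matrix.trace, Matrix.diag, Matrix.smul_apply, Matrix.one_apply,
    mul_ite, mul_one, mul_zero]

lemma key_semicausal [Nonempty A]
    (Λ : Matrix (A × B) (A × B) ℂ → Matrix (A × B) (A × B) ℂ)
    (hΛ : IsChannel Λ) (hsc : SemicausalAtoB Λ) (p q : A × B) :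
    trA (Λ (tensIdA (Gdep A) (Matrix.single p q 1)))
      = trA (Λ (Matrix.single p q 1)) := by
  obtain ⟨m, K, hK, -⟩ := hΛ
  have hΛadd : ∀ X Y, Λ (X + Y) = Λ X + Λ Y := by
    intro X Y
    simp [hK, mul_add, add_mul, Finset.sum_add_distrib]
  have hΛsmul : ∀ (s : ℂ) X, Λ (s • X) = s • Λ X := by
    intro s X
    simp [hK, Finset.smul_sum, Matrix.mul_smul, Matrix.smul_mul]
  have hTadd : ∀ X Y : Matrix (A × B) (A × B) ℂ,
      tensIdA (Gdep A) (X + Y) = tensIdA (Gdep A) X + tensIdA (Gdep A) Y := by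
    intro X Y
    ext pp qq
    simp only [Matrix.add_apply, tensIdA_Gdep_apply, Finset.sum_add_distrib, add_mul]
    split <;> simp
  have hTsmul : ∀ (s : ℂ) (X : Matrix (A × B) (A × B) ℂ),
      tensIdA (Gdep A) (s • X) = s • tensIdA (Gdep A) X := by
    intro s X
    ext pp qq
    simp only [Matrix.smul_apply, tensIdA_Gdep_apply, smul_eq_mul]
    split
    · rw [← Finset.mul_sum, mul_assoc]
    · rw [mul_zero]
  set f : Matrix (A × B) (A × B) ℂ → Matrix B B ℂ :=
    fun X => trA (Λ (tensIdA (Gdep A) X)) - trA (Λ X) with hf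
  have fadd : ∀ X Y, f (X + Y) = f X + f Y := by
    intro X Y
    simp only [hf, hTadd, hΛadd, trA_add]
    abel
  have fsmul : ∀ (s : ℂ) X, f (s • X) = s • f X := by
    intro s X
    simp only [hf, hTsmul, hΛsmul, trA_smul, smul_sub]
  have fstate : ∀ ρ, IsState ρ → f ρ = 0 := by
    intro ρ hρ
    have := hsc ρ hρ (Gdep A) (Gdep_channel A)
    simp only [hf]
    rw [this, sub_self]
  have hgoal : f (Matrix.single p q 1) = 0 := by
    by_cases hpq : p = q
    · subst hpq
      exact fstate _ (Stmt9Aux.E_state p)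
    · have h1 := fstate _ (Stmt9Aux.vone_state hpq)
      have h2 := fstate _ (Stmt9Aux.vi_state hpq)
      have h3 := fstate _ (Stmt9Aux.E_state p)
      have h4 := fstate _ (Stmt9Aux.E_state q)
      rw [Stmt9Aux.stdBasis_decomp hpq, fadd, fadd, fadd, h1, fsmul, h2, fsmul, h3,
        fsmul, h4]
      simp
  have := sub_eq_zero.mp hgoal
  exact this

end KeyLemma
/-- the Choi–Jamiołkowski state of an A↛B semicausal channel `Λ`,
`ρ_Choi = (Λ_{AB} ⊗ id_{A'B'})[P⁺_{AA'} ⊗ P⁺_{BB'}]`, has its partial trace over the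
`A` factor equal to `(I_{A'}/|A|) ⊗ ρ_{BB'}` where `ρ_{BB'} = (Λ_B ⊗ id_{B'})[P⁺_{BB'}]`
and `Λ_B` is the reduced channel (stated entrywise; the row/column indices of the Choi
state are of the form `((a,b),(a',b'))` with `(a,b)` on system `AB` and `(a',b')` on
the copy `A'B'`). -/
theorem stmt_9 {A B : Type*} [Fintype A] [Fintype B] [DecidableEq A] [DecidableEq B]
    [Nonempty A] [Nonempty B]
    (Λ : Matrix (A × B) (A × B) ℂ → Matrix (A × B) (A × B) ℂ)
    (hΛ : IsChannel Λ) (hsc : SemicausalAtoB Λ) :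
    ∀ (a' c' : A) (b b' d d' : B),
      ∑ a : A, lamTensId Λ (maxEnt (A × B)) ((a, b), (a', b')) ((a, d), (c', d'))
        = (if a' = c' then ((Fintype.card A : ℂ))⁻¹ else 0)
            * lamTensId (redB Λ) (maxEnt B) (b, b') (d, d') := by
  intro a' c' b b' d d'
  have hch := hΛ
  obtain ⟨m, K, hK, -⟩ := hΛ
  have hΛsmul : ∀ (s : ℂ) X, Λ (s • X) = s • Λ X := by
    intro s X
    simp [hK, Finset.smul_sum, Matrix.mul_smul, Matrix.smul_mul]
  set cA : ℂ := (Fintype.card A : ℂ) with hcA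
  set cB : ℂ := (Fintype.card B : ℂ) with hcB
  set E : Matrix (A × B) (A × B) ℂ := Matrix.single ((a', b')) ((c', d')) 1 with hE
  set Eb : Matrix B B ℂ := Matrix.single b' d' 1 with hEb
  set W : Matrix (A × B) (A × B) ℂ := (cA⁻¹ • (1 : Matrix A A ℂ)) ⊗ₖ Eb with hW
  -- Step 1 : the left-hand side
  have hM : (Matrix.of fun i j => maxEnt (A × B) (i, (a', b')) (j, (c', d')))
      = (cA * cB)⁻¹ • E := by
    ext i j
    simp only [maxEnt, Matrix.of_apply, Matrix.smul_apply, hE, Matrix.single,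
      smul_eq_mul, Fintype.card_prod, hcA, hcB]
    by_cases h1 : i = (a', b') <;> by_cases h2 : j = (c', d') <;>
      simp [h1, h2, eq_comm] <;> push_cast <;> ring
  have hL : ∑ a : A, lamTensId Λ (maxEnt (A × B)) ((a, b), (a', b')) ((a, d), (c', d'))
      = ((cA * cB)⁻¹ • trA (Λ E)) b d := by
    have h1 : ∀ a : A, lamTensId Λ (maxEnt (A × B)) ((a, b), (a', b')) ((a, d), (c', d'))
        = Λ ((cA * cB)⁻¹ • E) (a, b) (a, d) := by
      intro a
      simp only [lamTensId, Matrix.of_apply]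
      rw [hM]
    rw [Finset.sum_congr rfl fun a _ => h1 a, hΛsmul]
    simp [trA, Finset.mul_sum]
  -- Step 2 : the action of the depolarizing channel on E
  have hT : tensIdA (Gdep A) E = (if a' = c' then (1 : ℂ) else 0) • W := by
    ext pp qq
    rw [tensIdA_Gdep_apply]
    obtain ⟨x1, x2⟩ := pp
    obtain ⟨y1, y2⟩ := qq
    have hsum : (∑ a : A, E (a, x2) (a, y2))
        = if a' = c' ∧ b' = x2 ∧ d' = y2 then 1 else 0 := by
      simp only [hE, Matrix.single, Matrix.of_apply, Prod.mk.injEq, ite_and]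
      by_cases h2 : b' = x2 <;> by_cases h4 : d' = y2 <;> by_cases h3 : a' = c' <;>
        simp [h2, h4, h3, Finset.sum_ite_eq, Finset.sum_ite_eq', eq_comm] <;>
        (try tauto) <;>
        (try { refine Finset.sum_eq_zero fun a _ => ?_; split_ifs with hh <;> simp_all })
    rw [hsum]
    simp only [hW, Matrix.smul_apply, Matrix.kroneckerMap_apply, Matrix.one_apply,
      hEb, Matrix.single, Matrix.of_apply, smul_eq_mul]
    by_cases h1 : x1 = y1 <;> by_cases h2 : a' = c' <;> by_cases h3 : b' = x2 <;>
      by_cases h4 : d' = y2 <;> simp [h1, h2, h3, h4] <;> ring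
  -- Step 3 : key consequence of semicausality
  have hkey : trA (Λ E) = (if a' = c' then (1 : ℂ) else 0) • trA (Λ W) := by
    conv_lhs => rw [hE, ← key_semicausal Λ hch hsc (a', b') (c', d'), ← hE, hT]
    rw [hΛsmul, trA_smul]
  -- Step 4 : the right-hand side
  have hN : (Matrix.of fun i j => maxEnt B (i, b') (j, d')) = cB⁻¹ • Eb := by
    ext i j
    simp only [maxEnt, Matrix.of_apply, Matrix.smul_apply, hEb, Matrix.single,
      smul_eq_mul, hcB]
    by_cases h1 : i = b'
    · subst h1
      by_cases h2 : j = d'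
      · subst h2; simp
      · simp [h2, Ne.symm h2]
    · have h1' : ¬ b' = i := fun h => h1 h.symm
      simp [h1, h1']
  have hR : lamTensId (redB Λ) (maxEnt B) (b, b') (d, d') = (cB⁻¹ • trA (Λ W)) b d := by
    show redB Λ (Matrix.of fun i j => maxEnt B (i, b') (j, d')) b d = _
    rw [hN]
    unfold redB
    rw [Matrix.kronecker_smul, hΛsmul, trA_smul]
  rw [hL, hkey, hR]
  simp only [Matrix.smul_apply, smul_eq_mul]
  by_cases h : a' = c' <;> simp [h, mul_inv] <;> (try ring)
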